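/- (Generalized Regge symmetry, type I.) Assume (r1,r2,r3,r4,i,j,N) is admissible and r1 + r3 = r2 + r4, and set ρ′ = (r1 + r3 + i + j)/2. Then the tuples (r1, ρ′−j, r3, ρ′−i, ρ′−r4, ρ′−r2, N) and (ρ′−j, r2, ρ′−i, r4, ρ′−r3, ρ′−r1, N) are admissible and satisfy the same fusion relation (first entry plus third entry equals second plus fourth), and F_1^N(r1, r2, i; r3, r4, j) = F_1^N(r1, ρ′−j, ρ′−r4; r3, ρ′−i, ρ′−r2) = F_1^N(ρ′−j, r2, ρ′−r3; ρ′−i, r4, ρ′−r1). For N = 2 these reduce to the classical Regge symmetries of the U_q(sl_2) 6-j symbol; for N > 2 they are new non-tetrahedral symmetries of multiplicity-free U_q(sl_N) 6-j symbols. -/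
import Mathlib


open Finset

/-- The quantum integer `[n] = (tⁿ − t⁻ⁿ)/(t − t⁻¹)`. -/
noncomputable def qint (t : ℝ) (n : ℤ) : ℝ := (t ^ n - t ^ (-n)) / (t - t⁻¹)

/-- The quantum factorial `[n]! = [1][2]⋯[n]`, with `[0]! = 1`
(and value `1` for negative arguments, which never occur below). -/
noncomputable def qfact (t : ℝ) (n : ℤ) : ℝ :=
  ∏ k ∈ Finset.range n.toNat, qint t ((k : ℤ) + 1)

/-- The q-Pochhammer symbol `(x; q)_n = ∏_{s=0}^{n−1} (1 − x qˢ)`. -/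
noncomputable def qpoch (x q : ℝ) (n : ℕ) : ℝ :=
  ∏ s ∈ Finset.range n, (1 - x * q ^ s)

/-- Admissibility of the tuple `(r₁,r₂,r₃,r₄,i,j,N)`. -/
def Admissible (r₁ r₂ r₃ r₄ i j N : ℤ) : Prop :=
  0 ≤ r₁ ∧ 0 ≤ r₂ ∧ 0 ≤ r₃ ∧ 0 ≤ r₄ ∧ 0 ≤ i ∧ 0 ≤ j ∧ 2 ≤ N ∧
  2 ∣ (r₁ + r₂ + i) ∧ 2 ∣ (r₃ + r₄ + i) ∧ 2 ∣ (r₁ + r₄ + j) ∧ 2 ∣ (r₂ + r₃ + j) ∧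
  max |r₁ - r₂| |r₃ - r₄| ≤ i ∧ i ≤ min (r₁ + r₂) (r₃ + r₄) ∧
  max |r₂ - r₃| |r₁ - r₄| ≤ j ∧ j ≤ min (r₂ + r₃) (r₁ + r₄)

/-- `ρ = (r₁+r₂+r₃+r₄)/2`. -/
def rho (r₁ r₂ r₃ r₄ : ℤ) : ℤ := (r₁ + r₂ + r₃ + r₄) / 2

/-- `m_max = (1/2)·min(r₁+r₂−i, r₃+r₄−i, r₁+r₄−j, r₂+r₃−j)`. -/
def mMax (r₁ r₂ r₃ r₄ i j : ℤ) : ℤ :=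
  (min (min (r₁ + r₂ - i) (r₃ + r₄ - i)) (min (r₁ + r₄ - j) (r₂ + r₃ - j))) / 2

/-- `m_min = (1/2)·max(0, r₁+r₃−i−j, r₂+r₄−i−j)`. -/
def mMin (r₁ r₂ r₃ r₄ i j : ℤ) : ℤ :=
  (max 0 (max (r₁ + r₃ - i - j) (r₂ + r₄ - i - j))) / 2

/-- `θ_N(a,b,c)`. -/
noncomputable def theta (t : ℝ) (N a b c : ℤ) : ℝ :=
  Real.sqrt (qfact t ((a + b - c) / 2) * qfact t ((a - b + c) / 2) *
    qfact t ((-a + b + c) / 2) / qfact t ((a + b + c) / 2 + N - 1))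

/-- `K′ = θ_N(r₁,r₂,i)·θ_N(r₃,r₄,i)·θ_N(r₁,r₄,j)·θ_N(r₂,r₃,j)·[N−1]!·[N−2]!`. -/
noncomputable def Kprime (t : ℝ) (N r₁ r₂ r₃ r₄ i j : ℤ) : ℝ :=
  theta t N r₁ r₂ i * theta t N r₃ r₄ i * theta t N r₁ r₄ j * theta t N r₂ r₃ j *
    qfact t (N - 1) * qfact t (N - 2)

/-- The multiplicity-free 6-j expression `F_T^N(r₁,r₂,i; r₃,r₄,j)` of type `T ∈ {1,2}`. -/
noncomputable def F (t : ℝ) (T : ℕ) (N r₁ r₂ i r₃ r₄ j : ℤ) : ℝ :=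
  Kprime t N r₁ r₂ r₃ r₄ i j *
    ∑ m ∈ Finset.Icc (mMin r₁ r₂ r₃ r₄ i j) (mMax r₁ r₂ r₃ r₄ i j),
      (-1 : ℝ) ^ (rho r₁ r₂ r₃ r₄ - m) * qfact t (rho r₁ r₂ r₃ r₄ + N - 1 - m) /
        (qfact t m * qfact t ((r₃ + r₄ - i) / 2 - m) * qfact t ((r₂ + r₃ - j) / 2 - m) *
          qfact t ((r₁ + r₄ - j) / 2 - m) * qfact t ((i + j - r₂ - r₄) / 2 + m) *
          qfact t ((r₁ + r₂ - i) / 2 + (N - 2) * (if T = 2 then 1 else 0) - m) *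
          qfact t ((i + j - r₁ - r₃) / 2 + (N - 2) * (if T = 1 then 1 else 0) + m))

/-- The prefactor `K_T` (for the case `m_min = 0`). -/
noncomputable def Kfac (t : ℝ) (T : ℕ) (N r₁ r₂ i r₃ r₄ j : ℤ) : ℝ :=
  Kprime t N r₁ r₂ r₃ r₄ i j * qfact t (rho r₁ r₂ r₃ r₄ + N - 1) /
    (qfact t ((r₃ + r₄ - i) / 2) *
      qfact t ((r₁ + r₂ - i) / 2 + (N - 2) * (if T = 2 then 1 else 0)) *
      qfact t ((r₂ + r₃ - j) / 2) * qfact t ((r₁ + r₄ - j) / 2) *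
      qfact t ((i + j - r₂ - r₄) / 2) *
      qfact t ((i + j - r₁ - r₃) / 2 + (N - 2) * (if T = 1 then 1 else 0)))

/- ### Auxiliary lemmas -/

set_option linter.unusedVariables false
set_option maxHeartbeats 1000000

lemma qint_pos {t : ℝ} (ht : 0 < t) (ht1 : t ≠ 1) {n : ℤ} (hn : 0 < n) : 0 < qint t n := by
  unfold qint
  rcases lt_or_gt_of_ne ht1 with h | h
  · apply div_pos_of_neg_of_neg
    · have := zpow_lt_zpow_right_of_lt_one₀ ht h (show -n < n by omega)
      linarith
    · have : 1 < t⁻¹ := (one_lt_inv₀ ht).2 h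
      linarith
  · apply div_pos
    · have := zpow_lt_zpow_right₀ h (show -n < n by omega)
      linarith
    · have : t⁻¹ < 1 := (inv_lt_one₀ ht).2 h
      linarith

lemma qfact_pos {t : ℝ} (ht : 0 < t) (ht1 : t ≠ 1) (n : ℤ) : 0 < qfact t n := by
  unfold qfact
  exact Finset.prod_pos fun k _ => qint_pos ht ht1 (by omega)

lemma theta_congr (t : ℝ) (N a b c x y z w : ℤ)
    (h1 : (a + b - c) / 2 = x) (h2 : (a - b + c) / 2 = y)
    (h3 : (-a + b + c) / 2 = z) (h4 : (a + b + c) / 2 = w) :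
    theta t N a b c =
      Real.sqrt (qfact t x * qfact t y * qfact t z / qfact t (w + N - 1)) := by
  rw [theta, h1, h2, h3, h4]

section Parts

variable {t : ℝ} (ht : 0 < t) (ht1 : t ≠ 1) (r₁ r₂ r₃ r₄ i j N : ℤ)
  (d1 : 2 ∣ (r₁ + r₂ + i)) (d2 : 2 ∣ (r₃ + r₄ + i))
  (d3 : 2 ∣ (r₁ + r₄ + j)) (d4 : 2 ∣ (r₂ + r₃ + j))
  (hfus : r₁ + r₃ = r₂ + r₄)

include ht ht1 d1 d2 d3 d4 hfus

lemma KprimeA :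
    Kprime t N r₁ ((r₁ + r₃ + i + j) / 2 - j) r₃ ((r₁ + r₃ + i + j) / 2 - i)
      ((r₁ + r₃ + i + j) / 2 - r₄) ((r₁ + r₃ + i + j) / 2 - r₂) =
    Kprime t N r₁ r₂ r₃ r₄ i j := by
  set P := (r₁ + r₃ + i + j) / 2 with hP
  have hq := qfact_pos ht ht1
  have key : ∀ x y z w : ℤ, (0:ℝ) ≤ qfact t x * qfact t y * qfact t z / qfact t (w + N - 1) :=
    fun x y z w => le_of_lt (div_pos (mul_pos (mul_pos (hq x) (hq y)) (hq z)) (hq _))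
  have combine : ∀ a b c d e f : ℝ, 0 ≤ a → 0 ≤ b → 0 ≤ c →
      Real.sqrt a * Real.sqrt b * Real.sqrt c * Real.sqrt d * e * f
        = Real.sqrt (a * b * c * d) * e * f := by
    intro a b c d e f ha hb hc
    rw [← Real.sqrt_mul ha, ← Real.sqrt_mul (mul_nonneg ha hb),
      ← Real.sqrt_mul (mul_nonneg (mul_nonneg ha hb) hc)]
  rw [Kprime, Kprime,
    theta_congr t N r₁ (P - j) (P - r₄) ((r₁+r₄-j)/2) ((r₁-r₄+j)/2) ((r₃-r₄+i)/2)
      ((r₁+r₂+i)/2) (by omega) (by omega) (by omega) (by omega),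
    theta_congr t N r₃ (P - i) (P - r₄) ((r₃+r₄-i)/2) ((-r₁+r₂+i)/2) ((r₂-r₃+j)/2)
      ((r₂+r₃+j)/2) (by omega) (by omega) (by omega) (by omega),
    theta_congr t N r₁ (P - i) (P - r₂) ((r₁+r₂-i)/2) ((r₁-r₂+i)/2) ((-r₁+r₄+j)/2)
      ((r₁+r₄+j)/2) (by omega) (by omega) (by omega) (by omega),
    theta_congr t N (P - j) r₃ (P - r₂) ((r₂+r₃-j)/2) ((-r₃+r₄+i)/2) ((-r₂+r₃+j)/2)
      ((r₃+r₄+i)/2) (by omega) (by omega) (by omega) (by omega),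
    theta_congr t N r₁ r₂ i ((r₁+r₂-i)/2) ((r₁-r₂+i)/2) ((-r₁+r₂+i)/2) ((r₁+r₂+i)/2)
      rfl rfl rfl rfl,
    theta_congr t N r₃ r₄ i ((r₃+r₄-i)/2) ((r₃-r₄+i)/2) ((-r₃+r₄+i)/2) ((r₃+r₄+i)/2)
      rfl rfl rfl rfl,
    theta_congr t N r₁ r₄ j ((r₁+r₄-j)/2) ((r₁-r₄+j)/2) ((-r₁+r₄+j)/2) ((r₁+r₄+j)/2)
      rfl rfl rfl rfl,
    theta_congr t N r₂ r₃ j ((r₂+r₃-j)/2) ((r₂-r₃+j)/2) ((-r₂+r₃+j)/2) ((r₂+r₃+j)/2)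
      rfl rfl rfl rfl,
    combine _ _ _ _ _ _ (key _ _ _ _) (key _ _ _ _) (key _ _ _ _),
    combine _ _ _ _ _ _ (key _ _ _ _) (key _ _ _ _) (key _ _ _ _)]
  congr 3
  ring

lemma KprimeB :
    Kprime t N ((r₁ + r₃ + i + j) / 2 - j) r₂ ((r₁ + r₃ + i + j) / 2 - i) r₄
      ((r₁ + r₃ + i + j) / 2 - r₃) ((r₁ + r₃ + i + j) / 2 - r₁) =
    Kprime t N r₁ r₂ r₃ r₄ i j := by
  set P := (r₁ + r₃ + i + j) / 2 with hP
  have hq := qfact_pos ht ht1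
  have key : ∀ x y z w : ℤ, (0:ℝ) ≤ qfact t x * qfact t y * qfact t z / qfact t (w + N - 1) :=
    fun x y z w => le_of_lt (div_pos (mul_pos (mul_pos (hq x) (hq y)) (hq z)) (hq _))
  have combine : ∀ a b c d e f : ℝ, 0 ≤ a → 0 ≤ b → 0 ≤ c →
      Real.sqrt a * Real.sqrt b * Real.sqrt c * Real.sqrt d * e * f
        = Real.sqrt (a * b * c * d) * e * f := by
    intro a b c d e f ha hb hc
    rw [← Real.sqrt_mul ha, ← Real.sqrt_mul (mul_nonneg ha hb),
      ← Real.sqrt_mul (mul_nonneg (mul_nonneg ha hb) hc)]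
  rw [Kprime, Kprime,
    theta_congr t N (P - j) r₂ (P - r₃) ((r₂+r₃-j)/2) ((r₁-r₂+i)/2) ((r₂-r₃+j)/2)
      ((r₁+r₂+i)/2) (by omega) (by omega) (by omega) (by omega),
    theta_congr t N (P - i) r₄ (P - r₃) ((r₃+r₄-i)/2) ((r₁-r₄+j)/2) ((-r₃+r₄+i)/2)
      ((r₁+r₄+j)/2) (by omega) (by omega) (by omega) (by omega),
    theta_congr t N (P - j) r₄ (P - r₁) ((r₁+r₄-j)/2) ((r₃-r₄+i)/2) ((-r₁+r₄+j)/2)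
      ((r₃+r₄+i)/2) (by omega) (by omega) (by omega) (by omega),
    theta_congr t N r₂ (P - i) (P - r₁) ((r₁+r₂-i)/2) ((-r₁+r₂+i)/2) ((-r₂+r₃+j)/2)
      ((r₂+r₃+j)/2) (by omega) (by omega) (by omega) (by omega),
    theta_congr t N r₁ r₂ i ((r₁+r₂-i)/2) ((r₁-r₂+i)/2) ((-r₁+r₂+i)/2) ((r₁+r₂+i)/2)
      rfl rfl rfl rfl,
    theta_congr t N r₃ r₄ i ((r₃+r₄-i)/2) ((r₃-r₄+i)/2) ((-r₃+r₄+i)/2) ((r₃+r₄+i)/2)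
      rfl rfl rfl rfl,
    theta_congr t N r₁ r₄ j ((r₁+r₄-j)/2) ((r₁-r₄+j)/2) ((-r₁+r₄+j)/2) ((r₁+r₄+j)/2)
      rfl rfl rfl rfl,
    theta_congr t N r₂ r₃ j ((r₂+r₃-j)/2) ((r₂-r₃+j)/2) ((-r₂+r₃+j)/2) ((r₂+r₃+j)/2)
      rfl rfl rfl rfl,
    combine _ _ _ _ _ _ (key _ _ _ _) (key _ _ _ _) (key _ _ _ _),
    combine _ _ _ _ _ _ (key _ _ _ _) (key _ _ _ _) (key _ _ _ _)]
  congr 3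
  ring

lemma partA :
    F t 1 N r₁ r₂ i r₃ r₄ j =
      F t 1 N r₁ ((r₁ + r₃ + i + j) / 2 - j) ((r₁ + r₃ + i + j) / 2 - r₄)
        r₃ ((r₁ + r₃ + i + j) / 2 - i) ((r₁ + r₃ + i + j) / 2 - r₂) := by
  have hKA := KprimeA ht ht1 r₁ r₂ r₃ r₄ i j N d1 d2 d3 d4 hfus
  set P := (r₁ + r₃ + i + j) / 2 with hP
  have hmin : mMin r₁ (P - j) r₃ (P - i) (P - r₄) (P - r₂) = mMin r₁ r₂ r₃ r₄ i j := by
    simp only [mMin]; omega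
  have hmax : mMax r₁ (P - j) r₃ (P - i) (P - r₄) (P - r₂) = mMax r₁ r₂ r₃ r₄ i j := by
    simp only [mMax]; omega
  have hrho : rho r₁ (P - j) r₃ (P - i) = rho r₁ r₂ r₃ r₄ := by
    simp only [rho]; omega
  simp only [F, show (if (1:ℕ) = 2 then (1:ℤ) else 0) = 0 from rfl,
    show (if (1:ℕ) = 1 then (1:ℤ) else 0) = 1 from rfl, if_true, mul_zero, add_zero, mul_one]
  rw [hKA, hmin, hmax, hrho]
  congr 1
  apply Finset.sum_congr rfl
  intro m hm
  rw [show (r₃ + (P - i) - (P - r₄)) / 2 - m = (r₃ + r₄ - i) / 2 - m by omega,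
    show (P - j + r₃ - (P - r₂)) / 2 - m = (r₂ + r₃ - j) / 2 - m by omega,
    show (r₁ + (P - i) - (P - r₂)) / 2 - m = (r₁ + r₂ - i) / 2 - m by omega,
    show (P - r₄ + (P - r₂) - (P - j) - (P - i)) / 2 + m = (i + j - r₂ - r₄) / 2 + m by omega,
    show (r₁ + (P - j) - (P - r₄)) / 2 - m = (r₁ + r₄ - j) / 2 - m by omega,
    show (P - r₄ + (P - r₂) - r₁ - r₃) / 2 + (N - 2) + m
      = (i + j - r₁ - r₃) / 2 + (N - 2) + m by omega]
  ring

lemma partB :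
    F t 1 N r₁ r₂ i r₃ r₄ j =
      F t 1 N ((r₁ + r₃ + i + j) / 2 - j) r₂ ((r₁ + r₃ + i + j) / 2 - r₃)
        ((r₁ + r₃ + i + j) / 2 - i) r₄ ((r₁ + r₃ + i + j) / 2 - r₁) := by
  have hKB := KprimeB ht ht1 r₁ r₂ r₃ r₄ i j N d1 d2 d3 d4 hfus
  set P := (r₁ + r₃ + i + j) / 2 with hP
  have hmin : mMin (P - j) r₂ (P - i) r₄ (P - r₃) (P - r₁) = mMin r₁ r₂ r₃ r₄ i j := by
    simp only [mMin]; omega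
  have hmax : mMax (P - j) r₂ (P - i) r₄ (P - r₃) (P - r₁) = mMax r₁ r₂ r₃ r₄ i j := by
    simp only [mMax]; omega
  have hrho : rho (P - j) r₂ (P - i) r₄ = rho r₁ r₂ r₃ r₄ := by
    simp only [rho]; omega
  simp only [F, show (if (1:ℕ) = 2 then (1:ℤ) else 0) = 0 from rfl,
    show (if (1:ℕ) = 1 then (1:ℤ) else 0) = 1 from rfl, if_true, mul_zero, add_zero, mul_one]
  rw [hKB, hmin, hmax, hrho]
  congr 1
  apply Finset.sum_congr rfl
  intro m hm
  rw [show (P - i + r₄ - (P - r₃)) / 2 - m = (r₃ + r₄ - i) / 2 - m by omega,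
    show (r₂ + (P - i) - (P - r₁)) / 2 - m = (r₁ + r₂ - i) / 2 - m by omega,
    show (P - j + r₄ - (P - r₁)) / 2 - m = (r₁ + r₄ - j) / 2 - m by omega,
    show (P - r₃ + (P - r₁) - r₂ - r₄) / 2 + m = (i + j - r₂ - r₄) / 2 + m by omega,
    show (P - j + r₂ - (P - r₃)) / 2 - m = (r₂ + r₃ - j) / 2 - m by omega,
    show (P - r₃ + (P - r₁) - (P - j) - (P - i)) / 2 + (N - 2) + m
      = (i + j - r₁ - r₃) / 2 + (N - 2) + m by omega]
  ring

end Parts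

/-- generalized Regge symmetry, type I: with `ρ′ = (r₁+r₃+i+j)/2`,
the two Regge-transformed tuples are admissible, satisfy the type I fusion relation
(first plus third equals second plus fourth), and give the same value of `F_1^N`. -/
theorem stmt9 (t : ℝ) (ht : 0 < t) (ht1 : t ≠ 1) (r₁ r₂ r₃ r₄ i j N : ℤ)
    (hadm : Admissible r₁ r₂ r₃ r₄ i j N) (hfus : r₁ + r₃ = r₂ + r₄) :
    Admissible r₁ ((r₁ + r₃ + i + j) / 2 - j) r₃ ((r₁ + r₃ + i + j) / 2 - i)
      ((r₁ + r₃ + i + j) / 2 - r₄) ((r₁ + r₃ + i + j) / 2 - r₂) N ∧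
    r₁ + r₃ = ((r₁ + r₃ + i + j) / 2 - j) + ((r₁ + r₃ + i + j) / 2 - i) ∧
    Admissible ((r₁ + r₃ + i + j) / 2 - j) r₂ ((r₁ + r₃ + i + j) / 2 - i) r₄
      ((r₁ + r₃ + i + j) / 2 - r₃) ((r₁ + r₃ + i + j) / 2 - r₁) N ∧
    ((r₁ + r₃ + i + j) / 2 - j) + ((r₁ + r₃ + i + j) / 2 - i) = r₂ + r₄ ∧
    F t 1 N r₁ r₂ i r₃ r₄ j =
      F t 1 N r₁ ((r₁ + r₃ + i + j) / 2 - j) ((r₁ + r₃ + i + j) / 2 - r₄)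
        r₃ ((r₁ + r₃ + i + j) / 2 - i) ((r₁ + r₃ + i + j) / 2 - r₂) ∧
    F t 1 N r₁ r₂ i r₃ r₄ j =
      F t 1 N ((r₁ + r₃ + i + j) / 2 - j) r₂ ((r₁ + r₃ + i + j) / 2 - r₃)
        ((r₁ + r₃ + i + j) / 2 - i) r₄ ((r₁ + r₃ + i + j) / 2 - r₁) := by
  obtain ⟨h1, h2, h3, h4, h5, h6, hN, d1, d2, d3, d4, hi1, hi2, hj1, hj2⟩ := hadm
  refine ⟨?_, ?_, ?_, ?_, partA ht ht1 r₁ r₂ r₃ r₄ i j N d1 d2 d3 d4 hfus,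
    partB ht ht1 r₁ r₂ r₃ r₄ i j N d1 d2 d3 d4 hfus⟩
  · simp only [max_le_iff, le_min_iff, abs_le] at hi1 hj1 hi2 hj2
    simp only [Admissible, max_le_iff, le_min_iff, abs_le]
    omega
  · omega
  · simp only [max_le_iff, le_min_iff, abs_le] at hi1 hj1 hi2 hj2
    simp only [Admissible, max_le_iff, le_min_iff, abs_le]
    omega
  · omega
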